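/- Let H be a Hopf algebra with bijective antipode S, L a 1-dimensional H-module on which H acts via an algebra map β : H → k. Then H_β := H with action h ·_β a = β(h_{(2)}) h_{(3)} a S^{-1}(h_{(1)}) and coaction Δ is a (left-right) Yetter–Drinfel'd H-module, i.e., it satisfies ρ(h ·_β a) = h_{(2)} ·_β a_{(1)} ⊗ h_{(3)} a_{(2)} S^{-1}(h_{(1)}) for all h, a ∈ H. -/

import Mathlib

open TensorProduct

variable {k H : Type*} [Field k] [Ring H] [HopfAlgebra k H]

/-- Iterated comultiplication `h ↦ (h₁ ⊗ h₂) ⊗ h₃`. -/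
noncomputable def comul2 : H →ₗ[k] (H ⊗[k] H) ⊗[k] H :=
  (TensorProduct.map (Coalgebra.comul (R := k)) (LinearMap.id : H →ₗ[k] H)) ∘ₗ
    Coalgebra.comul (R := k)

/-- Radford's action on `H_β`: `h ·_β a = β(h₂) h₃ a S⁻¹(h₁)`, as a linear map
`H ⊗ H →ₗ H` (first factor acting on the second). -/
noncomputable def radfordAct (β : H →ₐ[k] k) (Sinv : H →ₗ[k] H) :
    H ⊗[k] H →ₗ[k] H :=
  LinearMap.mul' k H ∘ₗ (TensorProduct.comm k H H).toLinearMap ∘ₗ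
    (TensorProduct.map
      ((TensorProduct.rid k H).toLinearMap ∘ₗ TensorProduct.map Sinv β.toLinearMap)
      (LinearMap.mul' k H)) ∘ₗ
    (TensorProduct.assoc k (H ⊗[k] H) H H).toLinearMap ∘ₗ
    (TensorProduct.map comul2 (LinearMap.id : H →ₗ[k] H))

/-- `(h₃ ⊗ a₂) ⊗ h₁ ↦ h₃ a₂ S⁻¹(h₁)`. -/
noncomputable def radfordQ (Sinv : H →ₗ[k] H) : (H ⊗[k] H) ⊗[k] H →ₗ[k] H :=
  LinearMap.mul' k H ∘ₗ TensorProduct.map (LinearMap.mul' k H) Sinv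

/-- `h₁ ⊗ (h₃ ⊗ (a₁ ⊗ a₂)) ↦ a₁ ⊗ ((h₃ ⊗ a₂) ⊗ h₁)`. -/
noncomputable def radfordInner :
    H ⊗[k] (H ⊗[k] (H ⊗[k] H)) →ₗ[k] H ⊗[k] ((H ⊗[k] H) ⊗[k] H) :=
  (TensorProduct.assoc k H (H ⊗[k] H) H).toLinearMap ∘ₗ
    (TensorProduct.map (TensorProduct.leftComm k H H H).toLinearMap
      (LinearMap.id : H →ₗ[k] H)) ∘ₗ
    (TensorProduct.comm k H (H ⊗[k] (H ⊗[k] H))).toLinearMap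

/-- The shuffle `((h₁ ⊗ h₂) ⊗ h₃) ⊗ (a₁ ⊗ a₂) ↦ (h₂ ⊗ a₁) ⊗ ((h₃ ⊗ a₂) ⊗ h₁)`. -/
noncomputable def radfordShuffle :
    ((H ⊗[k] H) ⊗[k] H) ⊗[k] (H ⊗[k] H) →ₗ[k]
      (H ⊗[k] H) ⊗[k] ((H ⊗[k] H) ⊗[k] H) :=
  (TensorProduct.assoc k H H ((H ⊗[k] H) ⊗[k] H)).symm.toLinearMap ∘ₗ
    (TensorProduct.map (LinearMap.id : H →ₗ[k] H) radfordInner) ∘ₗ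
    (TensorProduct.assoc k H H (H ⊗[k] (H ⊗[k] H))).toLinearMap ∘ₗ
    (TensorProduct.map (TensorProduct.comm k H H).toLinearMap
      (LinearMap.id : H ⊗[k] (H ⊗[k] H) →ₗ[k] H ⊗[k] (H ⊗[k] H))) ∘ₗ
    (TensorProduct.assoc k (H ⊗[k] H) H (H ⊗[k] H)).toLinearMap


open Coalgebra HopfAlgebra

variable {M : Type*} [AddCommMonoid M] [Module k M]
variable {ι1 ι2 ι3 ι4 ι5 ι6 : Type*}

lemma repr_move {a : H} (r : Repr k a ι1) (rl : ∀ i : ι1, Repr k (r.left i) ι2)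
    (rr : ∀ i : ι1, Repr k (r.right i) ι3) (φ : H ⊗[k] (H ⊗[k] H) →ₗ[k] M) :
    ∑ i ∈ r.index, ∑ j ∈ (rl i).index,
      φ ((rl i).left j ⊗ₜ ((rl i).right j ⊗ₜ r.right i))
    = ∑ i ∈ r.index, ∑ j ∈ (rr i).index,
      φ (r.left i ⊗ₜ ((rr i).left j ⊗ₜ (rr i).right j)) := by
  have h := sum_tmul_tmul_eq r rl rr
  have := congrArg φ h
  simpa [map_sum] using this

lemma sum_eps_right {a : H} (r : Repr k a ι1) (f : H →ₗ[k] M) :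
    ∑ i ∈ r.index, counit (R := k) (r.right i) • f (r.left i) = f a := by
  have h := sum_map_tmul_counit_eq (R := k) f a (repr := r)
  have := congrArg (TensorProduct.rid k M) h
  simp only [map_sum, TensorProduct.rid_tmul, one_smul] at this
  exact this

lemma sum_eps_left {a : H} (r : Repr k a ι1) (f : H →ₗ[k] M) :
    ∑ i ∈ r.index, counit (R := k) (r.left i) • f (r.right i) = f a := by
  have h := sum_counit_tmul_map_eq (R := k) f a (repr := r)
  have := congrArg (TensorProduct.lid k M) h
  simp only [map_sum, TensorProduct.lid_tmul, one_smul] at this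
  exact this

noncomputable def Coalgebra.Repr.mul' {a b : H} (ra : Repr k a ι1) (rb : Repr k b ι2) :
    Repr k (a * b) (ι1 × ι2) where
  index := ra.index ×ˢ rb.index
  left p := ra.left p.1 * rb.left p.2
  right p := ra.right p.1 * rb.right p.2
  eq := by
    rw [Bialgebra.comul_mul, ← ra.eq, ← rb.eq, Finset.sum_mul_sum]
    rw [Finset.sum_product]
    simp [Algebra.TensorProduct.tmul_mul_tmul]

/-- `x ⊗ (y ⊗ z) ↦ x * (y * z)`. -/
noncomputable def trimul : H ⊗[k] (H ⊗[k] H) →ₗ[k] H :=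
  LinearMap.mul' k H ∘ₗ LinearMap.lTensor H (LinearMap.mul' k H)

@[simp] lemma trimul_apply (x y z : H) : trimul (k := k) (x ⊗ₜ (y ⊗ₜ z)) = x * (y * z) := by
  simp [trimul]

lemma antipode_one : antipode (R := k) (1 : H) = 1 := by
  have := mul_antipode_rTensor_comul_apply (R := k) (1 : H)
  simpa [Bialgebra.comul_one, Algebra.TensorProduct.one_def] using this

lemma antipode_mul (a b : H) :
    antipode (R := k) (a * b) = antipode (R := k) b * antipode (R := k) a := by
  set ra := ℛ k a; set rb := ℛ k b
  set ra1 : ∀ i, Repr k (ra.left i) (H × H) := fun i => ℛ k _ with hra1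
  set ra2 : ∀ i, Repr k (ra.right i) (H × H) := fun i => ℛ k _ with hra2
  set rb1 : ∀ j, Repr k (rb.left j) (H × H) := fun j => ℛ k _ with hrb1
  set rb2 : ∀ j, Repr k (rb.right j) (H × H) := fun j => ℛ k _ with hrb2
  -- the magic element
  set Y : H := ∑ i ∈ ra.index, ∑ m ∈ (ra2 i).index, ∑ j ∈ rb.index, ∑ n ∈ (rb2 j).index,
      antipode (R := k) (rb.left j) * (antipode (R := k) (ra.left i) *
        (((ra2 i).left m * (rb2 j).left n) * antipode (R := k) ((ra2 i).right m * (rb2 j).right n))) with hY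
  -- φY for the move on `a`
  set φY : H ⊗[k] (H ⊗[k] H) →ₗ[k] H :=
    ∑ j ∈ rb.index, ∑ n ∈ (rb2 j).index,
      trimul ∘ₗ TensorProduct.map (LinearMap.mulLeft k (antipode (R := k) (rb.left j)) ∘ₗ antipode (R := k))
        (TensorProduct.map (LinearMap.mulRight k ((rb2 j).left n))
          (antipode (R := k) ∘ₗ LinearMap.mulRight k ((rb2 j).right n))) with hφY
  have hφY_apply : ∀ x y z : H, φY (x ⊗ₜ (y ⊗ₜ z)) =
      ∑ j ∈ rb.index, ∑ n ∈ (rb2 j).index,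
        antipode (R := k) (rb.left j) * (antipode (R := k) x * ((y * (rb2 j).left n) * antipode (R := k) (z * (rb2 j).right n))) := by
    intro x y z
    simp [hφY, LinearMap.sum_apply, mul_assoc]
  -- the helper linear map `g z = ∑ S b₁ * (bL * antipode (R := k) (z * bR))`
  set g : H →ₗ[k] H :=
    ∑ j ∈ rb.index, ∑ n ∈ (rb2 j).index,
      LinearMap.mulLeft k (antipode (R := k) (rb.left j)) ∘ₗ LinearMap.mulLeft k ((rb2 j).left n) ∘ₗ
        antipode (R := k) ∘ₗ LinearMap.mulRight k ((rb2 j).right n) with hg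
  have hg_apply : ∀ z : H, g z = ∑ j ∈ rb.index, ∑ n ∈ (rb2 j).index,
      antipode (R := k) (rb.left j) * ((rb2 j).left n * antipode (R := k) (z * (rb2 j).right n)) := by
    intro z; simp [hg, LinearMap.sum_apply]
  -- Evaluation 1 : Y = antipode (R := k) (a * b)
  have eval1 : Y = antipode (R := k) (a * b) := by
    have h0 : Y = ∑ i ∈ ra.index, ∑ m ∈ (ra2 i).index,
        φY (ra.left i ⊗ₜ ((ra2 i).left m ⊗ₜ (ra2 i).right m)) := by
      rw [hY]
      refine Finset.sum_congr rfl fun i _ => Finset.sum_congr rfl fun m _ => ?_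
      rw [hφY_apply]
    rw [h0, ← repr_move ra ra1 ra2 φY]
    have h1 : ∀ i ∈ ra.index, ∑ m ∈ (ra1 i).index,
        φY ((ra1 i).left m ⊗ₜ ((ra1 i).right m ⊗ₜ ra.right i)) =
        counit (R := k) (ra.left i) • g (ra.right i) := by
      intro i _
      simp only [hφY_apply]
      rw [Finset.sum_comm]
      refine Eq.trans (Finset.sum_congr rfl fun j _ => Finset.sum_comm) ?_
      rw [hg_apply, Finset.smul_sum]
      refine Finset.sum_congr rfl fun j _ => ?_
      rw [Finset.smul_sum]
      refine Finset.sum_congr rfl fun n _ => ?_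
      -- ∑ m, S b₁ * (antipode (R := k) x' * ((y' * bL) * w)) = ε(a₁) • (S b₁ * (bL * antipode (R := k) (z * bR)))
      have : ∀ x' y' : H, antipode (R := k) (rb.left j) * (antipode (R := k) x' * ((y' * (rb2 j).left n) *
            antipode (R := k) (ra.right i * (rb2 j).right n))) =
          antipode (R := k) (rb.left j) * ((antipode (R := k) x' * y') * ((rb2 j).left n *
            antipode (R := k) (ra.right i * (rb2 j).right n))) := by
        intro x' y'; rw [mul_assoc, mul_assoc]
      simp only [this]
      rw [← Finset.mul_sum, ← Finset.sum_mul,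
        sum_antipode_mul_eq_smul (ra1 i), smul_mul_assoc, one_mul, mul_smul_comm]
    rw [Finset.sum_congr rfl h1, sum_eps_left ra g, hg_apply]
    -- now the move on b
    set φb : H ⊗[k] (H ⊗[k] H) →ₗ[k] H :=
      trimul ∘ₗ TensorProduct.map (antipode (R := k))
        (TensorProduct.map LinearMap.id (antipode (R := k) ∘ₗ LinearMap.mulLeft k a)) with hφb
    have hφb_apply : ∀ x y z : H, φb (x ⊗ₜ (y ⊗ₜ z)) = antipode (R := k) x * (y * antipode (R := k) (a * z)) := by
      intro x y z; simp [hφb]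
    have h2 : ∑ j ∈ rb.index, ∑ n ∈ (rb2 j).index,
        antipode (R := k) (rb.left j) * ((rb2 j).left n * antipode (R := k) (a * (rb2 j).right n)) =
        ∑ j ∈ rb.index, ∑ n ∈ (rb2 j).index,
          φb (rb.left j ⊗ₜ ((rb2 j).left n ⊗ₜ (rb2 j).right n)) := by
      simp only [hφb_apply]
    rw [h2, ← repr_move rb rb1 rb2 φb]
    have h3 : ∀ j ∈ rb.index, ∑ n ∈ (rb1 j).index,
        φb ((rb1 j).left n ⊗ₜ ((rb1 j).right n ⊗ₜ rb.right j)) =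
        counit (R := k) (rb.left j) • (antipode (R := k) ∘ₗ LinearMap.mulLeft k a) (rb.right j) := by
      intro j _
      simp only [hφb_apply, ← mul_assoc, ← Finset.sum_mul,
        sum_antipode_mul_eq_smul (rb1 j), smul_mul_assoc, one_mul]
      simp
    rw [Finset.sum_congr rfl h3, sum_eps_left rb (antipode (R := k) ∘ₗ LinearMap.mulLeft k a)]
    simp
  -- Evaluation 2 : Y = antipode (R := k) b * antipode (R := k) a
  have eval2 : Y = antipode (R := k) b * antipode (R := k) a := by
    rw [hY]
    have h0 : ∀ i ∈ ra.index, ∑ m ∈ (ra2 i).index, ∑ j ∈ rb.index, ∑ n ∈ (rb2 j).index,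
        antipode (R := k) (rb.left j) * (antipode (R := k) (ra.left i) *
          (((ra2 i).left m * (rb2 j).left n) * antipode (R := k) ((ra2 i).right m * (rb2 j).right n))) =
        ∑ j ∈ rb.index, (counit (R := k) (ra.right i) * counit (R := k) (rb.right j)) •
          (antipode (R := k) (rb.left j) * antipode (R := k) (ra.left i)) := by
      intro i _
      rw [Finset.sum_comm]
      refine Finset.sum_congr rfl fun j _ => ?_
      rw [← Finset.sum_product']
      have : ∑ p ∈ (ra2 i).index ×ˢ (rb2 j).index,
          antipode (R := k) (rb.left j) * (antipode (R := k) (ra.left i) *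
            (((ra2 i).left p.1 * (rb2 j).left p.2) * antipode (R := k) ((ra2 i).right p.1 * (rb2 j).right p.2))) =
          antipode (R := k) (rb.left j) * (antipode (R := k) (ra.left i) *
            ∑ p ∈ ((ra2 i).mul' (rb2 j)).index,
              ((ra2 i).mul' (rb2 j)).left p * antipode (R := k) (((ra2 i).mul' (rb2 j)).right p)) := by
        rw [Finset.mul_sum, Finset.mul_sum]
        rfl
      rw [this, sum_mul_antipode_eq_smul ((ra2 i).mul' (rb2 j)), Bialgebra.counit_mul]
      rw [mul_smul_comm, mul_smul_comm, mul_one]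
    rw [Finset.sum_congr rfl h0]
    have h1 : ∀ i ∈ ra.index, ∑ j ∈ rb.index,
        (counit (R := k) (ra.right i) * counit (R := k) (rb.right j)) •
          (antipode (R := k) (rb.left j) * antipode (R := k) (ra.left i)) =
        counit (R := k) (ra.right i) •
          (∑ j ∈ rb.index, counit (R := k) (rb.right j) • (antipode (R := k) (rb.left j) * antipode (R := k) (ra.left i))) := by
      intro i _
      rw [Finset.smul_sum]
      refine Finset.sum_congr rfl fun j _ => (mul_smul _ _ _)
    rw [Finset.sum_congr rfl h1]
    have h2 : ∑ i ∈ ra.index, counit (R := k) (ra.right i) •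
        (∑ j ∈ rb.index, counit (R := k) (rb.right j) • (antipode (R := k) (rb.left j) * antipode (R := k) (ra.left i))) =
        ∑ j ∈ rb.index, counit (R := k) (rb.right j) • (antipode (R := k) (rb.left j) * antipode (R := k) a) := by
      have := sum_eps_right ra
        (∑ j ∈ rb.index, counit (R := k) (rb.right j) •
          (LinearMap.mulLeft k (antipode (R := k) (rb.left j)) ∘ₗ antipode (R := k)))
      simp only [LinearMap.sum_apply, LinearMap.smul_apply, LinearMap.coe_comp,
        Function.comp_apply, LinearMap.mulLeft_apply, Finset.smul_sum] at this ⊢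
      exact this
    rw [h2]
    have := sum_eps_right rb (LinearMap.mulRight k (antipode (R := k) a) ∘ₗ antipode (R := k))
    simp only [LinearMap.coe_comp, Function.comp_apply, LinearMap.mulRight_apply] at this
    exact this
  rw [← eval1, eval2]

section Sinv
variable (Sinv : H →ₗ[k] H)
  (hS1 : Sinv ∘ₗ HopfAlgebra.antipode (R := k) = (LinearMap.id : H →ₗ[k] H))
  (hS2 : HopfAlgebra.antipode (R := k) ∘ₗ Sinv = (LinearMap.id : H →ₗ[k] H))

include hS1

lemma Sinv_antipode (x : H) : Sinv (antipode (R := k) x) = x :=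
  LinearMap.congr_fun hS1 x

lemma Sinv_one : Sinv (1 : H) = 1 := by
  have := Sinv_antipode (k := k) Sinv hS1 1
  rwa [_root_.antipode_one] at this

include hS2

lemma antipode_Sinv (x : H) : antipode (R := k) (Sinv x) = x :=
  LinearMap.congr_fun hS2 x

lemma Sinv_mul (x y : H) : Sinv (x * y) = Sinv y * Sinv x := by
  have inj : Function.Injective (antipode (R := k) (A := H)) := by
    intro u v huv
    have := congrArg Sinv huv
    rwa [Sinv_antipode Sinv hS1, Sinv_antipode Sinv hS1] at this
  apply inj
  rw [antipode_Sinv Sinv hS1 hS2, _root_.antipode_mul, antipode_Sinv Sinv hS1 hS2,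
    antipode_Sinv Sinv hS1 hS2]

/-- `∑ S⁻¹(a₂) a₁ = ε(a) 1`. -/
lemma sum_Sinv_mul {a : H} (r : Repr k a ι1) :
    ∑ i ∈ r.index, Sinv (r.right i) * r.left i = counit (R := k) a • 1 := by
  have h := sum_antipode_mul_eq_smul (R := k) r
  have := congrArg Sinv h
  rw [map_sum, map_smul, Sinv_one Sinv hS1] at this
  refine Eq.trans (Finset.sum_congr rfl fun i _ => ?_).symm this
  rw [Sinv_mul Sinv hS1 hS2, Sinv_antipode Sinv hS1]

/-- `∑ a₂ S⁻¹(a₁) = ε(a) 1`. -/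
lemma sum_mul_Sinv {a : H} (r : Repr k a ι1) :
    ∑ i ∈ r.index, r.right i * Sinv (r.left i) = counit (R := k) a • 1 := by
  have h := sum_mul_antipode_eq_smul (R := k) r
  have := congrArg Sinv h
  rw [map_sum, map_smul, Sinv_one Sinv hS1] at this
  refine Eq.trans (Finset.sum_congr rfl fun i _ => ?_).symm this
  rw [Sinv_mul Sinv hS1 hS2, Sinv_antipode Sinv hS1]

end Sinv

section CS
variable (Sinv : H →ₗ[k] H)
  (hS1 : Sinv ∘ₗ HopfAlgebra.antipode (R := k) = (LinearMap.id : H →ₗ[k] H))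
  (hS2 : HopfAlgebra.antipode (R := k) ∘ₗ Sinv = (LinearMap.id : H →ₗ[k] H))

/-- `h ↦ ∑ S⁻¹(h₂) ⊗ S⁻¹(h₁)`. -/
noncomputable def Tmap : H →ₗ[k] H ⊗[k] H :=
  (TensorProduct.comm k H H).toLinearMap ∘ₗ TensorProduct.map Sinv Sinv ∘ₗ
    Coalgebra.comul (R := k)

lemma Tmap_repr {c : H} (rc : Repr k c ι1) :
    Tmap Sinv c = ∑ i ∈ rc.index, Sinv (rc.right i) ⊗ₜ Sinv (rc.left i) := by
  rw [Tmap]; simp only [LinearMap.coe_comp, Function.comp_apply, LinearEquiv.coe_coe]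
  rw [← rc.eq, map_sum, map_sum]
  simp

include hS1 hS2

lemma subkey (c : H) (rc : Repr k c ι1) :
    ∑ j ∈ rc.index, Coalgebra.comul (R := k) (rc.right j) * Tmap Sinv (rc.left j) =
      counit (R := k) c • (1 : H ⊗[k] H) := by
  set xrep : ∀ j, Repr k (rc.left j) (H × H) := fun j => ℛ k _ with hxrep
  set wrep : ∀ j, Repr k (rc.right j) (H × H) := fun j => ℛ k _ with hwrep
  set φ' : H ⊗[k] (H ⊗[k] H) →ₗ[k] H ⊗[k] H :=
    LinearMap.mul' k (H ⊗[k] H) ∘ₗ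
      LinearMap.lTensor (H ⊗[k] H) (TensorProduct.comm k H H).toLinearMap ∘ₗ
      (TensorProduct.leftComm k H (H ⊗[k] H) H).toLinearMap ∘ₗ
      LinearMap.lTensor H (TensorProduct.comm k H (H ⊗[k] H)).toLinearMap ∘ₗ
      TensorProduct.map Sinv (TensorProduct.map Sinv (Coalgebra.comul (R := k))) with hφ'
  have hφ'_apply : ∀ x y z : H, φ' (x ⊗ₜ (y ⊗ₜ z)) =
      Coalgebra.comul (R := k) z * (Sinv y ⊗ₜ Sinv x) := by
    intro x y z; simp [hφ', TensorProduct.leftComm]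
  have step1 : ∑ j ∈ rc.index,
      Coalgebra.comul (R := k) (rc.right j) * Tmap Sinv (rc.left j) =
      ∑ j ∈ rc.index, ∑ w ∈ (xrep j).index,
        φ' ((xrep j).left w ⊗ₜ ((xrep j).right w ⊗ₜ rc.right j)) := by
    refine Finset.sum_congr rfl fun j _ => ?_
    rw [Tmap_repr Sinv (xrep j), Finset.mul_sum]
    exact Finset.sum_congr rfl fun w _ => by rw [hφ'_apply]
  rw [step1, repr_move rc xrep wrep φ']
  set zrep : ∀ j m, Repr k ((wrep j).right m) (H × H) := fun j m => ℛ k _ with hzrep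
  set lrep : ∀ j m, Repr k ((wrep j).left m) (H × H) := fun j m => ℛ k _ with hlrep
  have step3 : ∀ j ∈ rc.index, ∑ m ∈ (wrep j).index,
      φ' (rc.left j ⊗ₜ ((wrep j).left m ⊗ₜ (wrep j).right m)) =
      (1 : H) ⊗ₜ[k] (rc.right j * Sinv (rc.left j)) := by
    intro j _
    set φ'' : H ⊗[k] (H ⊗[k] H) →ₗ[k] H ⊗[k] H :=
      TensorProduct.map (LinearMap.mul' k H) (LinearMap.mulRight k (Sinv (rc.left j))) ∘ₗ
        (TensorProduct.assoc k H H H).symm.toLinearMap ∘ₗ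
        (TensorProduct.leftComm k H H H).toLinearMap ∘ₗ
        LinearMap.rTensor (H ⊗[k] H) Sinv with hφ''
    have hφ''_apply : ∀ u v w : H, φ'' (u ⊗ₜ (v ⊗ₜ w)) =
        (v * Sinv u) ⊗ₜ[k] (w * Sinv (rc.left j)) := by
      intro u v w; simp [hφ'', TensorProduct.leftComm]
    have e1 : ∑ m ∈ (wrep j).index,
        φ' (rc.left j ⊗ₜ ((wrep j).left m ⊗ₜ (wrep j).right m)) =
        ∑ m ∈ (wrep j).index, ∑ n ∈ (zrep j m).index,
          φ'' ((wrep j).left m ⊗ₜ ((zrep j m).left n ⊗ₜ (zrep j m).right n)) := by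
      refine Finset.sum_congr rfl fun m _ => ?_
      rw [hφ'_apply, ← (zrep j m).eq, Finset.sum_mul]
      exact Finset.sum_congr rfl fun n _ => by
        rw [hφ''_apply, Algebra.TensorProduct.tmul_mul_tmul]
    rw [e1, ← repr_move _ (lrep j) (zrep j) φ'']
    have e2 : ∀ m ∈ (wrep j).index, ∑ n ∈ (lrep j m).index,
        φ'' ((lrep j m).left n ⊗ₜ ((lrep j m).right n ⊗ₜ (wrep j).right m)) =
        counit (R := k) ((wrep j).left m) •
          ((1:H) ⊗ₜ[k] ((wrep j).right m * Sinv (rc.left j))) := by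
      intro m _
      have : ∀ n, φ'' ((lrep j m).left n ⊗ₜ ((lrep j m).right n ⊗ₜ (wrep j).right m)) =
          ((lrep j m).right n * Sinv ((lrep j m).left n)) ⊗ₜ[k]
            ((wrep j).right m * Sinv (rc.left j)) := fun n => hφ''_apply _ _ _
      simp only [this]
      rw [← TensorProduct.sum_tmul, sum_mul_Sinv Sinv hS1 hS2 (lrep j m),
        TensorProduct.smul_tmul']
    rw [Finset.sum_congr rfl e2]
    have := sum_eps_left (wrep j)
      ((TensorProduct.mk k H H 1) ∘ₗ LinearMap.mulRight k (Sinv (rc.left j)))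
    simpa using this
  rw [Finset.sum_congr rfl step3, ← TensorProduct.tmul_sum,
    sum_mul_Sinv Sinv hS1 hS2 rc, TensorProduct.tmul_smul]
  rw [Algebra.TensorProduct.one_def]

lemma comul_Sinv (a : H) :
    Coalgebra.comul (R := k) (Sinv a) = Tmap Sinv a := by
  set ra := ℛ k a with hra
  set rl1 : ∀ i, Repr k (ra.left i) (H × H) := fun i => ℛ k _ with hrl1
  set rr1 : ∀ i, Repr k (ra.right i) (H × H) := fun i => ℛ k _ with hrr1
  set m2 : (H ⊗[k] H) ⊗[k] (H ⊗[k] H) →ₗ[k] H ⊗[k] H :=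
    LinearMap.mul' k (H ⊗[k] H) ∘ₗ (TensorProduct.comm k _ _).toLinearMap with hm2
  set φZ : H ⊗[k] (H ⊗[k] H) →ₗ[k] H ⊗[k] H :=
    LinearMap.mul' k (H ⊗[k] H) ∘ₗ LinearMap.rTensor (H ⊗[k] H) m2 ∘ₗ
      (TensorProduct.comm k _ _).toLinearMap ∘ₗ
      TensorProduct.map (Tmap Sinv)
        (TensorProduct.map (Coalgebra.comul (R := k))
          (Coalgebra.comul (R := k) ∘ₗ Sinv)) with hφZ
  have hφZ_apply : ∀ x y z : H, φZ (x ⊗ₜ (y ⊗ₜ z)) =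
      (Coalgebra.comul (R := k) (Sinv z) * Coalgebra.comul (R := k) y) * Tmap Sinv x := by
    intro x y z; simp [hφZ, hm2]
  have g1 : ∑ i ∈ ra.index, ∑ q ∈ (rr1 i).index,
      φZ (ra.left i ⊗ₜ ((rr1 i).left q ⊗ₜ (rr1 i).right q)) = Tmap Sinv a := by
    refine Eq.trans (Finset.sum_congr rfl fun i _ => ?_) (sum_eps_right ra (Tmap Sinv))
    have : ∀ q, φZ (ra.left i ⊗ₜ ((rr1 i).left q ⊗ₜ (rr1 i).right q)) =
        Coalgebra.comul (R := k) (Sinv ((rr1 i).right q) * (rr1 i).left q) *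
          Tmap Sinv (ra.left i) := by
      intro q; rw [hφZ_apply, ← Bialgebra.comul_mul]
    simp only [this]
    rw [← Finset.sum_mul, ← map_sum, sum_Sinv_mul Sinv hS1 hS2 (rr1 i), map_smul,
      Bialgebra.comul_one, smul_mul_assoc, one_mul]
  have g2 : ∑ i ∈ ra.index, ∑ q ∈ (rr1 i).index,
      φZ (ra.left i ⊗ₜ ((rr1 i).left q ⊗ₜ (rr1 i).right q)) =
      Coalgebra.comul (R := k) (Sinv a) := by
    rw [← repr_move ra rl1 rr1 φZ]
    have : ∀ i ∈ ra.index, ∑ j ∈ (rl1 i).index,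
        φZ ((rl1 i).left j ⊗ₜ ((rl1 i).right j ⊗ₜ ra.right i)) =
        counit (R := k) (ra.left i) •
          (Coalgebra.comul (R := k) (Sinv (ra.right i))) := by
      intro i _
      have h1 : ∀ j, φZ ((rl1 i).left j ⊗ₜ ((rl1 i).right j ⊗ₜ ra.right i)) =
          Coalgebra.comul (R := k) (Sinv (ra.right i)) *
            (Coalgebra.comul (R := k) ((rl1 i).right j) * Tmap Sinv ((rl1 i).left j)) := by
        intro j; rw [hφZ_apply, mul_assoc]
      simp only [h1]
      rw [← Finset.mul_sum, subkey Sinv hS1 hS2 _ (rl1 i), mul_smul_comm, mul_one]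
    rw [Finset.sum_congr rfl this]
    exact sum_eps_left ra (Coalgebra.comul (R := k) ∘ₗ Sinv)
  rw [← g2, g1]

end CS

/-- `α ⊗ y ↦ y * c * α`. -/
noncomputable def gmul (c : H) : H ⊗[k] H →ₗ[k] H :=
  LinearMap.mul' k H ∘ₗ LinearMap.rTensor H (LinearMap.mulRight k c) ∘ₗ
    (TensorProduct.comm k H H).toLinearMap

@[simp] lemma gmul_apply (c α y : H) : gmul (k := k) c (α ⊗ₜ y) = y * c * α := by
  simp [gmul, mul_assoc]

section Star

section Star
variable (β : H →ₐ[k] k) (Sinv : H →ₗ[k] H)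

/-- move map 1: `x ⊗ (y ⊗ z) ↦ Σ β(x₂) • (y c S⁻¹(x₁₂)) ⊗ (z d S⁻¹(x₁₁))`. -/
noncomputable def gphi1 (c d : H) : H ⊗[k] (H ⊗[k] H) →ₗ[k] H ⊗[k] H :=
  (TensorProduct.lid k (H ⊗[k] H)).toLinearMap ∘ₗ
    LinearMap.lTensor k (TensorProduct.map (gmul c) (gmul d) ∘ₗ
      (TensorProduct.tensorTensorTensorComm k H H H H).toLinearMap) ∘ₗ
    (TensorProduct.leftComm k (H ⊗[k] H) k (H ⊗[k] H)).toLinearMap ∘ₗ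
    (TensorProduct.assoc k (H ⊗[k] H) k (H ⊗[k] H)).toLinearMap ∘ₗ
    LinearMap.rTensor (H ⊗[k] H)
      (TensorProduct.map (Tmap Sinv) β.toLinearMap ∘ₗ Coalgebra.comul (R := k))

set_option synthInstance.maxHeartbeats 1000000 in
set_option maxHeartbeats 1000000 in
lemma gphi1_eval (c d : H) (x y z : H) (rx : Repr k x ι1)
    (rxu : ∀ j, Repr k (rx.left j) ι2) :
    gphi1 β Sinv c d (x ⊗ₜ (y ⊗ₜ z)) = ∑ j ∈ rx.index, ∑ w ∈ (rxu j).index,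
      β (rx.right j) • ((y * c * Sinv ((rxu j).right w)) ⊗ₜ[k]
        (z * d * Sinv ((rxu j).left w))) := by
  have hPx : TensorProduct.map (Tmap Sinv) β.toLinearMap (Coalgebra.comul (R := k) x)
      = ∑ j ∈ rx.index, ∑ w ∈ (rxu j).index,
        (Sinv ((rxu j).right w) ⊗ₜ[k] Sinv ((rxu j).left w)) ⊗ₜ[k] β (rx.right j) := by
    rw [← rx.eq, map_sum]
    refine Finset.sum_congr rfl fun j _ => ?_
    rw [TensorProduct.map_tmul, Tmap_repr Sinv (rxu j), TensorProduct.sum_tmul]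
    simp
  rw [gphi1]
  simp only [LinearMap.coe_comp, Function.comp_apply, LinearEquiv.coe_coe,
    LinearMap.rTensor_tmul]
  rw [hPx, TensorProduct.sum_tmul, map_sum, map_sum, map_sum, map_sum]
  refine Finset.sum_congr rfl fun j _ => ?_
  rw [TensorProduct.sum_tmul, map_sum, map_sum, map_sum, map_sum]
  refine Finset.sum_congr rfl fun w _ => ?_
  simp only [TensorProduct.assoc_tmul, TensorProduct.leftComm_tmul,
    LinearMap.lTensor_tmul, LinearMap.coe_comp, Function.comp_apply,
    LinearEquiv.coe_coe, TensorProduct.tensorTensorTensorComm_tmul,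
    TensorProduct.map_tmul, gmul_apply, TensorProduct.lid_tmul]

/-- move map 2: `x ⊗ (y ⊗ z) ↦ Σ β(y) • (z c S⁻¹(x₂)) ⊗ (e S⁻¹(x₁))`. -/
noncomputable def gphi2 (c e : H) : H ⊗[k] (H ⊗[k] H) →ₗ[k] H ⊗[k] H :=
  (TensorProduct.lid k (H ⊗[k] H)).toLinearMap ∘ₗ
    LinearMap.lTensor k (TensorProduct.map (gmul c) (LinearMap.mulLeft k e) ∘ₗ
      (TensorProduct.assoc k H H H).symm.toLinearMap ∘ₗ
      LinearMap.lTensor H (TensorProduct.comm k H H).toLinearMap ∘ₗ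
      (TensorProduct.assoc k H H H).toLinearMap) ∘ₗ
    (TensorProduct.leftComm k (H ⊗[k] H) k H).toLinearMap ∘ₗ
    LinearMap.lTensor (H ⊗[k] H) (TensorProduct.map β.toLinearMap LinearMap.id) ∘ₗ
    LinearMap.rTensor (H ⊗[k] H) (Tmap Sinv)

set_option synthInstance.maxHeartbeats 1000000 in
set_option maxHeartbeats 1000000 in
lemma gphi2_eval (c e : H) (x y z : H) (rx : Repr k x ι1) :
    gphi2 β Sinv c e (x ⊗ₜ (y ⊗ₜ z)) = ∑ w ∈ rx.index,
      β y • ((z * c * Sinv (rx.right w)) ⊗ₜ[k] (e * Sinv (rx.left w))) := by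
  rw [gphi2]
  simp only [LinearMap.coe_comp, Function.comp_apply, LinearEquiv.coe_coe,
    LinearMap.rTensor_tmul]
  rw [Tmap_repr Sinv rx, TensorProduct.sum_tmul, map_sum, map_sum, map_sum, map_sum]
  refine Finset.sum_congr rfl fun w _ => ?_
  simp only [LinearMap.lTensor_tmul, TensorProduct.map_tmul,
    TensorProduct.leftComm_tmul, LinearMap.coe_comp, Function.comp_apply,
    LinearEquiv.coe_coe, TensorProduct.assoc_tmul, TensorProduct.comm_tmul,
    TensorProduct.assoc_symm_tmul, gmul_apply, LinearMap.mulLeft_apply,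
    TensorProduct.lid_tmul, LinearMap.id_coe, id_eq, AlgHom.toLinearMap_apply]

/-- move map 3: `x ⊗ (y ⊗ z) ↦ Σ β(z₁) • (z₂ c S⁻¹(y)) ⊗ (e S⁻¹(x))`. -/
noncomputable def gphi3 (c e : H) : H ⊗[k] (H ⊗[k] H) →ₗ[k] H ⊗[k] H :=
  (TensorProduct.lid k (H ⊗[k] H)).toLinearMap ∘ₗ
    LinearMap.lTensor k (TensorProduct.map (gmul c) (LinearMap.mulLeft k e) ∘ₗ
      (TensorProduct.comm k H (H ⊗[k] H)).toLinearMap) ∘ₗ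
    (TensorProduct.leftComm k H k (H ⊗[k] H)).toLinearMap ∘ₗ
    LinearMap.lTensor H (TensorProduct.leftComm k H k H).toLinearMap ∘ₗ
    TensorProduct.map Sinv (TensorProduct.map Sinv
      (TensorProduct.map β.toLinearMap LinearMap.id ∘ₗ Coalgebra.comul (R := k)))

set_option synthInstance.maxHeartbeats 1000000 in
set_option maxHeartbeats 1000000 in
lemma gphi3_eval (c e : H) (x y z : H) (rz : Repr k z ι1) :
    gphi3 β Sinv c e (x ⊗ₜ (y ⊗ₜ z)) = ∑ m ∈ rz.index,
      β (rz.left m) • ((rz.right m * c * Sinv y) ⊗ₜ[k] (e * Sinv x)) := by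
  rw [gphi3]
  simp only [LinearMap.coe_comp, Function.comp_apply, LinearEquiv.coe_coe]
  rw [TensorProduct.map_tmul, TensorProduct.map_tmul, LinearMap.coe_comp,
    Function.comp_apply, ← rz.eq, map_sum]
  rw [TensorProduct.tmul_sum, TensorProduct.tmul_sum, map_sum, map_sum, map_sum, map_sum]
  refine Finset.sum_congr rfl fun m _ => ?_
  simp only [TensorProduct.map_tmul, LinearMap.lTensor_tmul,
    TensorProduct.leftComm_tmul, LinearMap.coe_comp, Function.comp_apply,
    LinearEquiv.coe_coe, TensorProduct.comm_tmul, gmul_apply,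
    LinearMap.mulLeft_apply, TensorProduct.lid_tmul, LinearMap.id_coe, id_eq,
    AlgHom.toLinearMap_apply]

/-- move map 5: `x ⊗ (y ⊗ z) ↦ β(y) • (z c S⁻¹(x)) ⊗ C`. -/
noncomputable def gphi5 (c C : H) : H ⊗[k] (H ⊗[k] H) →ₗ[k] H ⊗[k] H :=
  (TensorProduct.lid k (H ⊗[k] H)).toLinearMap ∘ₗ
    LinearMap.lTensor k (((TensorProduct.mk k H H).flip C) ∘ₗ gmul c) ∘ₗ
    (TensorProduct.leftComm k H k H).toLinearMap ∘ₗ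
    TensorProduct.map Sinv (TensorProduct.map β.toLinearMap LinearMap.id)

set_option synthInstance.maxHeartbeats 1000000 in
set_option maxHeartbeats 1000000 in
lemma gphi5_eval (c C : H) (x y z : H) :
    gphi5 β Sinv c C (x ⊗ₜ (y ⊗ₜ z)) = β y • ((z * c * Sinv x) ⊗ₜ[k] C) := by
  rw [gphi5]
  simp [TensorProduct.leftComm]

set_option maxHeartbeats 2000000 in
lemma star (c d h : H) (r : Repr k h ι1) (rl : ∀ i, Repr k (r.left i) ι2)
    (t : ∀ i, Repr k (r.right i) ι3) (u : ∀ i j, Repr k ((rl i).left j) ι4)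
    (s : ∀ i j, Repr k ((rl i).right j) ι5) (sl : ∀ i j m, Repr k ((s i j).left m) ι6) :
    ∑ i ∈ r.index, ∑ j ∈ (rl i).index, ∑ q ∈ (t i).index, ∑ w ∈ (u i j).index,
      β ((rl i).right j) • (((t i).left q * c * Sinv ((u i j).right w)) ⊗ₜ[k]
        ((t i).right q * d * Sinv ((u i j).left w)))
    = ∑ i ∈ r.index, ∑ j ∈ (rl i).index, ∑ m ∈ (s i j).index, ∑ n ∈ (sl i j m).index,
      β ((sl i j m).right n) • (((s i j).right m * c * Sinv ((sl i j m).left n)) ⊗ₜ[k]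
        (r.right i * d * Sinv ((rl i).left j))) := by
  classical
  set v : ∀ i j w, Repr k ((u i j).left w) (H × H) := fun i j w => ℛ k _ with hv
  set z2 : ∀ i j m, Repr k ((s i j).right m) (H × H) := fun i j m => ℛ k _ with hz2
  calc
    ∑ i ∈ r.index, ∑ j ∈ (rl i).index, ∑ q ∈ (t i).index, ∑ w ∈ (u i j).index,
      β ((rl i).right j) • (((t i).left q * c * Sinv ((u i j).right w)) ⊗ₜ[k]
        ((t i).right q * d * Sinv ((u i j).left w)))
      = ∑ i ∈ r.index, ∑ q ∈ (t i).index,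
          gphi1 β Sinv c d (r.left i ⊗ₜ ((t i).left q ⊗ₜ (t i).right q)) := by
        refine Finset.sum_congr rfl fun i _ => ?_
        rw [Finset.sum_comm]
        refine Finset.sum_congr rfl fun q _ => ?_
        rw [gphi1_eval β Sinv c d _ _ _ (rl i) (u i)]
    _ = ∑ i ∈ r.index, ∑ j ∈ (rl i).index,
          gphi1 β Sinv c d ((rl i).left j ⊗ₜ ((rl i).right j ⊗ₜ r.right i)) :=
        (repr_move r rl t (gphi1 β Sinv c d)).symm
    _ = ∑ i ∈ r.index, ∑ j ∈ (rl i).index, ∑ w ∈ (u i j).index,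
          gphi2 β Sinv c (r.right i * d)
            ((u i j).left w ⊗ₜ ((u i j).right w ⊗ₜ (rl i).right j)) := by
        refine Finset.sum_congr rfl fun i _ => Finset.sum_congr rfl fun j _ => ?_
        rw [gphi1_eval β Sinv c d _ _ _ (u i j) (v i j)]
        refine Finset.sum_congr rfl fun w _ => ?_
        rw [gphi2_eval β Sinv c (r.right i * d) _ _ _ (v i j w)]
    _ = ∑ i ∈ r.index, ∑ j ∈ (rl i).index, ∑ m ∈ (s i j).index,
          gphi2 β Sinv c (r.right i * d)
            ((rl i).left j ⊗ₜ ((s i j).left m ⊗ₜ (s i j).right m)) := by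
        refine Finset.sum_congr rfl fun i _ => ?_
        exact repr_move (rl i) (u i) (s i) (gphi2 β Sinv c (r.right i * d))
    _ = ∑ i ∈ r.index, ∑ j ∈ (rl i).index, ∑ w ∈ (u i j).index,
          gphi3 β Sinv c (r.right i * d)
            ((u i j).left w ⊗ₜ ((u i j).right w ⊗ₜ (rl i).right j)) := by
        refine Finset.sum_congr rfl fun i _ => Finset.sum_congr rfl fun j _ => ?_
        rw [Finset.sum_congr rfl fun m (_ : m ∈ (s i j).index) =>
          gphi2_eval β Sinv c (r.right i * d) _ _ _ (u i j)]
        rw [Finset.sum_congr rfl fun w (_ : w ∈ (u i j).index) =>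
          gphi3_eval β Sinv c (r.right i * d) _ _ _ (s i j)]
        exact Finset.sum_comm
    _ = ∑ i ∈ r.index, ∑ j ∈ (rl i).index, ∑ m ∈ (s i j).index,
          gphi3 β Sinv c (r.right i * d)
            ((rl i).left j ⊗ₜ ((s i j).left m ⊗ₜ (s i j).right m)) := by
        refine Finset.sum_congr rfl fun i _ => ?_
        exact repr_move (rl i) (u i) (s i) (gphi3 β Sinv c (r.right i * d))
    _ = ∑ i ∈ r.index, ∑ j ∈ (rl i).index, ∑ m ∈ (s i j).index, ∑ n ∈ (z2 i j m).index,
          gphi5 β Sinv c (r.right i * d * Sinv ((rl i).left j))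
            ((s i j).left m ⊗ₜ ((z2 i j m).left n ⊗ₜ (z2 i j m).right n)) := by
        refine Finset.sum_congr rfl fun i _ => Finset.sum_congr rfl fun j _ =>
          Finset.sum_congr rfl fun m _ => ?_
        rw [gphi3_eval β Sinv c (r.right i * d) _ _ _ (z2 i j m)]
        refine Finset.sum_congr rfl fun n _ => ?_
        rw [gphi5_eval]
    _ = ∑ i ∈ r.index, ∑ j ∈ (rl i).index, ∑ m ∈ (s i j).index, ∑ n ∈ (sl i j m).index,
          gphi5 β Sinv c (r.right i * d * Sinv ((rl i).left j))
            ((sl i j m).left n ⊗ₜ ((sl i j m).right n ⊗ₜ (s i j).right m)) := by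
        refine Finset.sum_congr rfl fun i _ => Finset.sum_congr rfl fun j _ => ?_
        exact (repr_move (s i j) (sl i j) (z2 i j)
          (gphi5 β Sinv c (r.right i * d * Sinv ((rl i).left j)))).symm
    _ = ∑ i ∈ r.index, ∑ j ∈ (rl i).index, ∑ m ∈ (s i j).index, ∑ n ∈ (sl i j m).index,
          β ((sl i j m).right n) • (((s i j).right m * c * Sinv ((sl i j m).left n)) ⊗ₜ[k]
            (r.right i * d * Sinv ((rl i).left j))) := by
        refine Finset.sum_congr rfl fun i _ => Finset.sum_congr rfl fun j _ =>
          Finset.sum_congr rfl fun m _ => Finset.sum_congr rfl fun n _ => ?_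
        rw [gphi5_eval]

end Star

lemma comul2_repr {h : H} (r : Repr k h ι1) (rl : ∀ i, Repr k (r.left i) ι2) :
    comul2 (k := k) h = ∑ i ∈ r.index, ∑ j ∈ (rl i).index,
      ((rl i).left j ⊗ₜ (rl i).right j) ⊗ₜ r.right i := by
  rw [comul2, LinearMap.coe_comp, Function.comp_apply, ← r.eq, map_sum]
  refine Finset.sum_congr rfl fun i _ => ?_
  rw [TensorProduct.map_tmul, ← (rl i).eq, TensorProduct.sum_tmul]
  simp

set_option synthInstance.maxHeartbeats 1000000 in
set_option maxHeartbeats 1000000 in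
lemma act_apply (β : H →ₐ[k] k) (Sinv : H →ₗ[k] H) {h : H} (r : Repr k h ι1)
    (rl : ∀ i, Repr k (r.left i) ι2) (a : H) :
    radfordAct β Sinv (h ⊗ₜ a) = ∑ i ∈ r.index, ∑ j ∈ (rl i).index,
      β ((rl i).right j) • (r.right i * a * Sinv ((rl i).left j)) := by
  rw [radfordAct]
  simp only [LinearMap.coe_comp, Function.comp_apply, LinearEquiv.coe_coe]
  rw [TensorProduct.map_tmul, comul2_repr r rl, LinearMap.id_coe, id_eq]
  rw [TensorProduct.sum_tmul, map_sum, map_sum, map_sum, map_sum]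
  refine Finset.sum_congr rfl fun i _ => ?_
  rw [TensorProduct.sum_tmul, map_sum, map_sum, map_sum, map_sum]
  refine Finset.sum_congr rfl fun j _ => ?_
  simp [mul_smul_comm, smul_mul_assoc, mul_assoc]

lemma goal1 (β : H →ₐ[k] k) (Sinv : H →ₗ[k] H)
    (hS1 : Sinv ∘ₗ HopfAlgebra.antipode (R := k) = (LinearMap.id : H →ₗ[k] H)) (a : H) :
    radfordAct β Sinv ((1 : H) ⊗ₜ[k] a) = a := by
  have h1 : Coalgebra.comul (R := k) (1 : H) = (1 : H) ⊗ₜ[k] (1 : H) := by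
    rw [Bialgebra.comul_one, Algebra.TensorProduct.one_def]
  simp [radfordAct, comul2, h1, Sinv_one Sinv hS1]

lemma goal2 (β : H →ₐ[k] k) (Sinv : H →ₗ[k] H)
    (hS1 : Sinv ∘ₗ HopfAlgebra.antipode (R := k) = (LinearMap.id : H →ₗ[k] H))
    (hS2 : HopfAlgebra.antipode (R := k) ∘ₗ Sinv = (LinearMap.id : H →ₗ[k] H))
    (h h' a : H) :
    radfordAct β Sinv ((h * h') ⊗ₜ[k] a) =
      radfordAct β Sinv (h ⊗ₜ[k] radfordAct β Sinv (h' ⊗ₜ[k] a)) := by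
  set ra := ℛ k h; set rb := ℛ k h'
  set ral : ∀ i, Repr k (ra.left i) (H × H) := fun i => ℛ k _ with hral
  set rbl : ∀ j, Repr k (rb.left j) (H × H) := fun j => ℛ k _ with hrbl
  rw [act_apply β Sinv (ra.mul' rb) (fun p => (ral p.1).mul' (rbl p.2)) a]
  simp only [TensorProduct.tmul_sum, map_sum, act_apply β Sinv rb rbl a,
    TensorProduct.tmul_smul, LinearMap.map_smul]
  have hR : ∀ j ∈ rb.index, ∀ n ∈ (rbl j).index,
      β ((rbl j).right n) •
        radfordAct β Sinv (h ⊗ₜ[k] (rb.right j * a * Sinv ((rbl j).left n))) =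
      ∑ i ∈ ra.index, ∑ m ∈ (ral i).index,
        β ((rbl j).right n) • (β ((ral i).right m) •
          (ra.right i * (rb.right j * a * Sinv ((rbl j).left n)) * Sinv ((ral i).left m))) := by
    intro j _ n _
    rw [act_apply β Sinv ra ral, Finset.smul_sum]
    exact Finset.sum_congr rfl fun i _ => Finset.smul_sum
  have hL : ∀ i ∈ ra.index, ∀ j ∈ rb.index, ∀ m ∈ (ral i).index, ∀ n ∈ (rbl j).index,
      β ((ral i).right m * (rbl j).right n) •
        ((ra.right i * rb.right j) * a * Sinv ((ral i).left m * (rbl j).left n)) =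
      β ((rbl j).right n) • (β ((ral i).right m) •
        (ra.right i * (rb.right j * a * Sinv ((rbl j).left n)) * Sinv ((ral i).left m))) := by
    intro i _ j _ m _ n _
    rw [map_mul, mul_comm (β ((ral i).right m)) (β ((rbl j).right n)), mul_smul]
    congr 1
    congr 1
    rw [Sinv_mul Sinv hS1 hS2]
    simp [mul_assoc]
  calc ∑ p ∈ (ra.mul' rb).index, ∑ q ∈ ((ral p.1).mul' (rbl p.2)).index,
        β (((ral p.1).mul' (rbl p.2)).right q) •
          ((ra.mul' rb).right p * a * Sinv (((ral p.1).mul' (rbl p.2)).left q))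
      = ∑ i ∈ ra.index, ∑ j ∈ rb.index, ∑ m ∈ (ral i).index, ∑ n ∈ (rbl j).index,
          β ((ral i).right m * (rbl j).right n) •
            ((ra.right i * rb.right j) * a * Sinv ((ral i).left m * (rbl j).left n)) := by
        simp only [Coalgebra.Repr.mul']
        rw [Finset.sum_product]
        refine Finset.sum_congr rfl fun i _ => Finset.sum_congr rfl fun j _ => ?_
        rw [Finset.sum_product]
    _ = ∑ i ∈ ra.index, ∑ j ∈ rb.index, ∑ m ∈ (ral i).index, ∑ n ∈ (rbl j).index,
          β ((rbl j).right n) • (β ((ral i).right m) •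
            (ra.right i * (rb.right j * a * Sinv ((rbl j).left n)) * Sinv ((ral i).left m))) := by
        refine Finset.sum_congr rfl fun i hi => Finset.sum_congr rfl fun j hj =>
          Finset.sum_congr rfl fun m hm => Finset.sum_congr rfl fun n hn => ?_
        exact hL i hi j hj m hm n hn
    _ = ∑ j ∈ rb.index, ∑ n ∈ (rbl j).index, ∑ i ∈ ra.index, ∑ m ∈ (ral i).index,
          β ((rbl j).right n) • (β ((ral i).right m) •
            (ra.right i * (rb.right j * a * Sinv ((rbl j).left n)) * Sinv ((ral i).left m))) := by
        rw [Finset.sum_comm]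
        refine Finset.sum_congr rfl fun j _ => ?_
        refine Eq.trans (Finset.sum_congr rfl fun i _ => Finset.sum_comm) ?_
        exact Finset.sum_comm
    _ = ∑ j ∈ rb.index, ∑ n ∈ (rbl j).index,
          β ((rbl j).right n) •
            radfordAct β Sinv (h ⊗ₜ[k] (rb.right j * a * Sinv ((rbl j).left n))) := by
        refine Finset.sum_congr rfl fun j hj => Finset.sum_congr rfl fun n hn => ?_
        exact (hR j hj n hn).symm

lemma shuffle_apply (x y z u' v' : H) :
    radfordShuffle (k := k) (((x ⊗ₜ y) ⊗ₜ z) ⊗ₜ (u' ⊗ₜ v')) =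
      (y ⊗ₜ u') ⊗ₜ ((z ⊗ₜ v') ⊗ₜ x) := by
  simp [radfordShuffle, radfordInner, TensorProduct.leftComm]

lemma Q_apply (Sinv : H →ₗ[k] H) (x y z : H) :
    radfordQ Sinv ((x ⊗ₜ y) ⊗ₜ z) = x * y * Sinv z := by
  simp [radfordQ]

set_option maxHeartbeats 4000000 in
set_option synthInstance.maxHeartbeats 1000000 in
lemma goal3 (β : H →ₐ[k] k) (Sinv : H →ₗ[k] H)
    (hS1 : Sinv ∘ₗ HopfAlgebra.antipode (R := k) = (LinearMap.id : H →ₗ[k] H))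
    (hS2 : HopfAlgebra.antipode (R := k) ∘ₗ Sinv = (LinearMap.id : H →ₗ[k] H)) :
    Coalgebra.comul (R := k) ∘ₗ radfordAct β Sinv =
      (TensorProduct.map (radfordAct β Sinv) (radfordQ Sinv)) ∘ₗ radfordShuffle ∘ₗ
        (TensorProduct.map comul2 (Coalgebra.comul (R := k))) := by
  apply TensorProduct.ext'
  intro h a
  simp only [LinearMap.coe_comp, Function.comp_apply]
  set r := ℛ k h with hr
  set ra := ℛ k a with hra
  set rl : ∀ i, Repr k (r.left i) (H × H) := fun i => ℛ k _ with hrl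
  set t : ∀ i, Repr k (r.right i) (H × H) := fun i => ℛ k _ with ht
  set u : ∀ i j, Repr k ((rl i).left j) (H × H) := fun i j => ℛ k _ with hu
  set s : ∀ i j, Repr k ((rl i).right j) (H × H) := fun i j => ℛ k _ with hs
  set sl : ∀ i j m, Repr k ((s i j).left m) (H × H) := fun i j m => ℛ k _ with hsl
  -- LHS
  have hL : Coalgebra.comul (R := k) (radfordAct β Sinv (h ⊗ₜ a)) =
      ∑ i ∈ r.index, ∑ j ∈ (rl i).index, ∑ q ∈ (t i).index, ∑ p ∈ ra.index,
        ∑ w ∈ (u i j).index,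
        β ((rl i).right j) • (((t i).left q * ra.left p * Sinv ((u i j).right w)) ⊗ₜ[k]
          ((t i).right q * ra.right p * Sinv ((u i j).left w))) := by
    rw [act_apply β Sinv r rl a, map_sum]
    refine Finset.sum_congr rfl fun i _ => ?_
    rw [map_sum]
    refine Finset.sum_congr rfl fun j _ => ?_
    rw [LinearMap.map_smul, Bialgebra.comul_mul, Bialgebra.comul_mul,
      comul_Sinv Sinv hS1 hS2 _, ← (t i).eq, ← ra.eq, Tmap_repr Sinv (u i j)]
    rw [Finset.sum_mul_sum, Finset.sum_mul]
    rw [Finset.smul_sum]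
    refine Finset.sum_congr rfl fun q _ => ?_
    rw [Finset.sum_mul, Finset.smul_sum]
    refine Finset.sum_congr rfl fun p _ => ?_
    rw [Finset.mul_sum, Finset.smul_sum]
    refine Finset.sum_congr rfl fun w _ => ?_
    rw [Algebra.TensorProduct.tmul_mul_tmul, Algebra.TensorProduct.tmul_mul_tmul]
  -- RHS
  have hR : TensorProduct.map (radfordAct β Sinv) (radfordQ Sinv)
      (radfordShuffle (TensorProduct.map comul2 (Coalgebra.comul (R := k)) (h ⊗ₜ a))) =
      ∑ i ∈ r.index, ∑ j ∈ (rl i).index, ∑ p ∈ ra.index, ∑ m ∈ (s i j).index,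
        ∑ n ∈ (sl i j m).index,
        β ((sl i j m).right n) •
          (((s i j).right m * ra.left p * Sinv ((sl i j m).left n)) ⊗ₜ[k]
            (r.right i * ra.right p * Sinv ((rl i).left j))) := by
    rw [TensorProduct.map_tmul, comul2_repr r rl, ← ra.eq]
    rw [TensorProduct.sum_tmul, map_sum, map_sum]
    refine Finset.sum_congr rfl fun i _ => ?_
    rw [TensorProduct.sum_tmul, map_sum, map_sum]
    refine Finset.sum_congr rfl fun j _ => ?_
    rw [TensorProduct.tmul_sum, map_sum, map_sum]
    refine Finset.sum_congr rfl fun p _ => ?_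
    rw [shuffle_apply, TensorProduct.map_tmul, Q_apply,
      act_apply β Sinv (s i j) (sl i j)]
    rw [TensorProduct.sum_tmul]
    refine Finset.sum_congr rfl fun m _ => ?_
    rw [TensorProduct.sum_tmul]
    refine Finset.sum_congr rfl fun n _ => ?_
    rw [TensorProduct.smul_tmul']
  rw [hL, hR]
  calc
    ∑ i ∈ r.index, ∑ j ∈ (rl i).index, ∑ q ∈ (t i).index, ∑ p ∈ ra.index, ∑ w ∈ (u i j).index,
        β ((rl i).right j) • (((t i).left q * ra.left p * Sinv ((u i j).right w)) ⊗ₜ[k]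
          ((t i).right q * ra.right p * Sinv ((u i j).left w)))
      = ∑ i ∈ r.index, ∑ j ∈ (rl i).index, ∑ p ∈ ra.index, ∑ q ∈ (t i).index, ∑ w ∈ (u i j).index,
          β ((rl i).right j) • (((t i).left q * ra.left p * Sinv ((u i j).right w)) ⊗ₜ[k]
          ((t i).right q * ra.right p * Sinv ((u i j).left w))) := by
        refine Finset.sum_congr rfl fun i _ => Finset.sum_congr rfl fun j _ =>
          Finset.sum_comm
    _ = ∑ i ∈ r.index, ∑ p ∈ ra.index, ∑ j ∈ (rl i).index, ∑ q ∈ (t i).index, ∑ w ∈ (u i j).index,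
          β ((rl i).right j) • (((t i).left q * ra.left p * Sinv ((u i j).right w)) ⊗ₜ[k]
          ((t i).right q * ra.right p * Sinv ((u i j).left w))) := by
        exact Finset.sum_congr rfl fun i _ => Finset.sum_comm
    _ = ∑ p ∈ ra.index, ∑ i ∈ r.index, ∑ j ∈ (rl i).index, ∑ q ∈ (t i).index, ∑ w ∈ (u i j).index,
          β ((rl i).right j) • (((t i).left q * ra.left p * Sinv ((u i j).right w)) ⊗ₜ[k]
          ((t i).right q * ra.right p * Sinv ((u i j).left w))) := Finset.sum_comm
    _ = ∑ p ∈ ra.index, ∑ i ∈ r.index, ∑ j ∈ (rl i).index, ∑ m ∈ (s i j).index, ∑ n ∈ (sl i j m).index,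
          β ((sl i j m).right n) •
          (((s i j).right m * ra.left p * Sinv ((sl i j m).left n)) ⊗ₜ[k]
            (r.right i * ra.right p * Sinv ((rl i).left j))) := by
        refine Finset.sum_congr rfl fun p _ => ?_
        exact star β Sinv (ra.left p) (ra.right p) h r rl t u s sl
    _ = ∑ i ∈ r.index, ∑ p ∈ ra.index, ∑ j ∈ (rl i).index, ∑ m ∈ (s i j).index, ∑ n ∈ (sl i j m).index,
          β ((sl i j m).right n) •
          (((s i j).right m * ra.left p * Sinv ((sl i j m).left n)) ⊗ₜ[k]
            (r.right i * ra.right p * Sinv ((rl i).left j))) := Finset.sum_comm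
    _ = ∑ i ∈ r.index, ∑ j ∈ (rl i).index, ∑ p ∈ ra.index, ∑ m ∈ (s i j).index, ∑ n ∈ (sl i j m).index,
          β ((sl i j m).right n) •
          (((s i j).right m * ra.left p * Sinv ((sl i j m).left n)) ⊗ₜ[k]
            (r.right i * ra.right p * Sinv ((rl i).left j))) := by
        exact Finset.sum_congr rfl fun i _ => Finset.sum_comm

/-- for a Hopf algebra `H` with bijective antipode `S` and an algebra map
`β : H → k`, Radford's `H_β` — `H` with action `h ·_β a = β(h₂) h₃ a S⁻¹(h₁)` and
coaction `Δ` — is a (left-right) Yetter–Drinfel'd `H`-module: the action is a module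
action and satisfies the compatibility
`ρ(h ·_β a) = h₂ ·_β a₁ ⊗ h₃ a₂ S⁻¹(h₁)` for all `h, a ∈ H`. -/
theorem stmt19 (β : H →ₐ[k] k) (Sinv : H →ₗ[k] H)
    (hS1 : Sinv ∘ₗ HopfAlgebra.antipode (R := k) = (LinearMap.id : H →ₗ[k] H))
    (hS2 : HopfAlgebra.antipode (R := k) ∘ₗ Sinv = (LinearMap.id : H →ₗ[k] H)) :
    (∀ a : H, radfordAct β Sinv ((1 : H) ⊗ₜ[k] a) = a) ∧
    (∀ h h' a : H, radfordAct β Sinv ((h * h') ⊗ₜ[k] a) =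
      radfordAct β Sinv (h ⊗ₜ[k] radfordAct β Sinv (h' ⊗ₜ[k] a))) ∧
    Coalgebra.comul (R := k) ∘ₗ radfordAct β Sinv =
      (TensorProduct.map (radfordAct β Sinv) (radfordQ Sinv)) ∘ₗ radfordShuffle ∘ₗ
        (TensorProduct.map comul2 (Coalgebra.comul (R := k))) := by
  exact ⟨fun a => goal1 β Sinv hS1 a, fun h h' a => goal2 β Sinv hS1 hS2 h h' a,
    goal3 β Sinv hS1 hS2⟩
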